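/- Let K ≥ 1, let q ∈ Δ_K have all coordinates strictly positive, let A ⊆ [K] be nonempty, let j ∈ A, let λ ∈ [−1,1] and c ∈ [0,1]. Define p_j = q_j / (Σ_{k∈A} q_k), and define r ∈ ℝ^K by r_j = λ·(1 − 1/p_j), r_i = λ for i ∈ A \ {j}, and r_i = 0 for i ∉ A. Then Σ_{i=1}^K q_i^{2−c} · r_i² ≤ 2 · (min(p_j, 1 − p_j))^{2−c} · (λ/p_j)². -/
import Mathlib


open Finset

/-- **Lemma 26 (sleeping bandits: bounding the weighted estimated regrets).**
Let `q ∈ Δ_K` have positive coordinates, `A ⊆ [K]` nonempty, `j ∈ A`,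
`λ ∈ [−1,1]`, `c ∈ [0,1]`, and set `p_j = q_j / Σ_{k∈A} q_k`.  With
`r_j = λ(1 − 1/p_j)`, `r_i = λ` for `i ∈ A∖{j}` and `r_i = 0` for `i ∉ A`,
`Σᵢ qᵢ^{2−c} rᵢ² ≤ 2·(min(p_j, 1−p_j))^{2−c}·(λ/p_j)²`. -/
theorem stmt17 {K : ℕ} (hK : 1 ≤ K) (q : Fin K → ℝ)
    (hq : (∀ i, 0 < q i) ∧ ∑ i, q i = 1)
    (A : Finset (Fin K)) (hA : A.Nonempty) (j : Fin K) (hj : j ∈ A)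
    (lam c : ℝ) (hlam : lam ∈ Set.Icc (-1:ℝ) 1) (hc : c ∈ Set.Icc (0:ℝ) 1)
    (pj : ℝ) (hpj : pj = q j / ∑ k ∈ A, q k)
    (r : Fin K → ℝ)
    (hr : ∀ i, r i = if i = j then lam * (1 - 1 / pj)
      else if i ∈ A then lam else 0) :
    ∑ i, q i ^ (2 - c) * (r i) ^ 2 ≤
      2 * (min pj (1 - pj)) ^ (2 - c) * (lam / pj) ^ 2 := by
  obtain ⟨hqpos, hqsum⟩ := hq
  obtain ⟨hlam1, hlam2⟩ := hlam
  obtain ⟨hc0, hc1⟩ := hc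
  set S := ∑ k ∈ A, q k with hS
  have hS0 : 0 < S := Finset.sum_pos (fun i _ => hqpos i) hA
  have hS1 : S ≤ 1 := by
    rw [← hqsum]
    exact Finset.sum_le_sum_of_subset_of_nonneg (Finset.subset_univ A)
      (fun i _ _ => (hqpos i).le)
  have hqjS : q j ≤ S := Finset.single_le_sum (fun i _ => (hqpos i).le) hj
  have hp0 : 0 < pj := by rw [hpj]; exact div_pos (hqpos j) hS0
  have hp1 : pj ≤ 1 := by
    rw [hpj, div_le_one hS0]; exact hqjS
  have hqj : q j = pj * S := by rw [hpj]; field_simp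
  have hqjp : q j ≤ pj := by nlinarith [hqpos j]
  have h1p : 0 ≤ 1 - pj := by linarith
  have he : (0:ℝ) ≤ 2 - c := by linarith
  have he1 : (0:ℝ) ≤ 1 - c := by linarith
  set m := min pj (1 - pj) with hm
  have hm0 : 0 ≤ m := le_min hp0.le h1p
  have hmle : pj * (1 - pj) ≤ m := le_min (by nlinarith) (by nlinarith)
  have hkey : pj ^ (2 - c) * (1 - pj) ^ (2 - c) ≤ m ^ (2 - c) := by
    rw [← Real.mul_rpow hp0.le h1p]
    exact Real.rpow_le_rpow (by positivity) hmle he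
  -- (1-pj)^2 ≤ (1-pj)^(2-c)
  have h2c : (1 - pj) ^ 2 ≤ (1 - pj) ^ (2 - c) := by
    rcases eq_or_lt_of_le h1p with h | h
    · rw [← h]
      rw [Real.zero_rpow (by linarith)]
      norm_num
    · calc (1 - pj) ^ 2 = (1 - pj) ^ ((2:ℕ):ℝ) := (Real.rpow_natCast _ 2).symm
        _ ≤ (1 - pj) ^ (2 - c) :=
          Real.rpow_le_rpow_of_exponent_ge h (by linarith) (by push_cast; linarith)
  have hp2c : pj ^ 2 ≤ pj ^ (2 - c) := by
    calc pj ^ 2 = pj ^ ((2:ℕ):ℝ) := (Real.rpow_natCast _ 2).symm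
      _ ≤ pj ^ (2 - c) :=
        Real.rpow_le_rpow_of_exponent_ge hp0 hp1 (by push_cast; linarith)
  -- split the sum
  have hsum : ∑ i, q i ^ (2 - c) * (r i) ^ 2
      = q j ^ (2 - c) * (lam * (1 - 1 / pj)) ^ 2
        + ∑ i ∈ A.erase j, q i ^ (2 - c) * lam ^ 2 := by
    rw [← Finset.sum_subset (Finset.subset_univ A)
      (by
        intro i _ hi
        have hij : i ≠ j := fun h => hi (h ▸ hj)
        rw [hr i, if_neg hij, if_neg hi]
        ring)]
    rw [← Finset.add_sum_erase A _ hj]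
    congr 1
    · rw [hr j, if_pos rfl]
    · refine Finset.sum_congr rfl (fun i hi => ?_)
      rw [hr i, if_neg (Finset.ne_of_mem_erase hi),
        if_pos (Finset.mem_of_mem_erase hi)]
  rw [hsum]
  have hB : 2 * m ^ (2 - c) * (lam / pj) ^ 2
      = m ^ (2 - c) * (lam / pj) ^ 2 + m ^ (2 - c) * (lam / pj) ^ 2 := by ring
  rw [hB]
  have hlp : (lam / pj) ^ 2 = lam ^ 2 / pj ^ 2 := by rw [div_pow]
  apply add_le_add
  · -- term j
    have e1 : q j ^ (2 - c) * (lam * (1 - 1 / pj)) ^ 2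
        = (q j ^ (2 - c) * (1 - pj) ^ 2) * (lam / pj) ^ 2 := by
      field_simp
      ring
    rw [e1]
    have h1 : q j ^ (2 - c) * (1 - pj) ^ 2 ≤ m ^ (2 - c) := by
      calc q j ^ (2 - c) * (1 - pj) ^ 2
          ≤ pj ^ (2 - c) * (1 - pj) ^ (2 - c) := by
            apply mul_le_mul (Real.rpow_le_rpow (hqpos j).le hqjp he) h2c
              (by positivity) (by positivity)
        _ ≤ m ^ (2 - c) := hkey
    exact mul_le_mul_of_nonneg_right h1 (by positivity)
  · -- rest of A
    rcases (A.erase j).eq_empty_or_nonempty with hE | hE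
    · rw [hE]
      simp only [Finset.sum_empty]
      positivity
    · set T := ∑ i ∈ A.erase j, q i with hT
      have hT0 : 0 < T := Finset.sum_pos (fun i _ => hqpos i) hE
      have hTS : q j + T = S := Finset.add_sum_erase A q hj
      have hT1p : T ≤ 1 - pj := by nlinarith
      have hbound : ∑ i ∈ A.erase j, q i ^ (2 - c) * lam ^ 2
          ≤ T ^ (2 - c) * lam ^ 2 := by
        rw [← Finset.sum_mul]
        apply mul_le_mul_of_nonneg_right _ (sq_nonneg lam)
        calc ∑ i ∈ A.erase j, q i ^ (2 - c)
            ≤ ∑ i ∈ A.erase j, T ^ (1 - c) * q i := by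
              refine Finset.sum_le_sum (fun i hi => ?_)
              have hiT : q i ≤ T :=
                Finset.single_le_sum (fun k _ => (hqpos k).le) hi
              have : q i ^ (2 - c) = q i ^ (1 - c) * q i := by
                rw [← Real.rpow_add_one (hqpos i).ne']
                congr 1
                ring
              rw [this]
              exact mul_le_mul_of_nonneg_right
                (Real.rpow_le_rpow (hqpos i).le hiT he1) (hqpos i).le
          _ = T ^ (1 - c) * T := by rw [← Finset.mul_sum]
          _ = T ^ (2 - c) := by
              rw [← Real.rpow_add_one hT0.ne']
              congr 1
              ring
      have hT2 : T ^ (2 - c) ≤ (1 - pj) ^ (2 - c) :=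
        Real.rpow_le_rpow hT0.le hT1p he
      have hkey2 : (1 - pj) ^ (2 - c) ≤ m ^ (2 - c) / pj ^ 2 := by
        rw [le_div_iff₀ (by positivity)]
        calc (1 - pj) ^ (2 - c) * pj ^ 2
            ≤ (1 - pj) ^ (2 - c) * pj ^ (2 - c) := by
              apply mul_le_mul_of_nonneg_left hp2c (by positivity)
          _ ≤ m ^ (2 - c) := by rw [mul_comm]; exact hkey
      calc ∑ i ∈ A.erase j, q i ^ (2 - c) * lam ^ 2
          ≤ T ^ (2 - c) * lam ^ 2 := hbound
        _ ≤ (m ^ (2 - c) / pj ^ 2) * lam ^ 2 := by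
            apply mul_le_mul_of_nonneg_right _ (sq_nonneg lam)
            exact le_trans hT2 hkey2
        _ = m ^ (2 - c) * (lam / pj) ^ 2 := by rw [hlp]; ring
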